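/- For a natural number n > 1, the nonzero roots of C_n are exactly the solutions of z^n = (-3 + √(8n+1))/(4n) or z^n = (-3 - √(8n+1))/(4n). In particular, if n is even, C_n has exactly two nonzero real roots (of equal modulus and opposite sign), and if n is odd, C_n has exactly two nonzero real roots, one positive and one negative. -/

import Mathlib

/-- The rational map given by the Chebyshev's method applied to `z·e^{z^n}`. -/
noncomputable def Cn (n : ℕ) (z : ℂ) : ℂ :=
  (n:ℂ) * z^(n+1) * (2*(n:ℂ)^2*z^(2*n) + 3*(n:ℂ)*z^n - (n:ℂ) + 1) /
    (2 * ((n:ℂ)*z^n + 1)^3)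

/-- For `n > 1`, the nonzero roots of `C_n` are exactly the solutions of
`z^n = (-3 ± √(8n+1))/(4n)`. If `n` is even, `C_n` has exactly two nonzero real
roots, of equal modulus and opposite sign; if `n` is odd, it has exactly two
nonzero real roots, one positive and one negative. -/
theorem Cn_nonzero_roots (n : ℕ) (hn : 1 < n) :
    (∀ z : ℂ, z ≠ 0 → (n:ℂ)*z^n + 1 ≠ 0 →
      (Cn n z = 0 ↔
        z^n = ((-3 + (Real.sqrt (8*n+1) : ℂ)) / (4*(n:ℂ))) ∨
        z^n = ((-3 - (Real.sqrt (8*n+1) : ℂ)) / (4*(n:ℂ))))) ∧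
    (Even n → ∃ x : ℝ, 0 < x ∧
      {y : ℝ | y ≠ 0 ∧ (n:ℂ)*(y:ℂ)^n + 1 ≠ 0 ∧ Cn n (y:ℂ) = 0} = {x, -x}) ∧
    (Odd n → ∃ x y : ℝ, 0 < x ∧ y < 0 ∧
      {t : ℝ | t ≠ 0 ∧ (n:ℂ)*(t:ℂ)^n + 1 ≠ 0 ∧ Cn n (t:ℂ) = 0} = {x, y}) := by
  have hn0 : (n:ℝ) ≠ 0 := by positivity
  have hnpos : (0:ℝ) < (n:ℝ) := by exact_mod_cast Nat.pos_of_ne_zero (by omega)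
  have hnC : (n:ℂ) ≠ 0 := Nat.cast_ne_zero.2 (by omega)
  set s : ℝ := Real.sqrt (8*n+1) with hs
  have hs2 : s^2 = 8*n+1 := Real.sq_sqrt (by positivity)
  have hs3 : 3 < s := by
    nlinarith [Real.sqrt_nonneg (8*(n:ℝ)+1), hs2, show (2:ℝ) ≤ (n:ℝ) by exact_mod_cast hn]
  set A : ℝ := (-3 + s)/(4*n) with hA'
  set B : ℝ := (-3 - s)/(4*n) with hB'
  have hA : 0 < A := div_pos (by linarith) (by positivity)
  have hB : B < 0 := div_neg_of_neg_of_pos (by linarith) (by positivity)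
  have hAC : (A:ℂ) = (-3 + (s:ℂ)) / (4*(n:ℂ)) := by push_cast [hA']; ring
  have hBC : (B:ℂ) = (-3 - (s:ℂ)) / (4*(n:ℂ)) := by push_cast [hB']; ring
  have hs2C : (s:ℂ)^2 = 8*(n:ℂ)+1 := by exact_mod_cast congrArg Complex.ofReal hs2
  have hfac : ∀ w : ℂ, 2*(n:ℂ)^2*w^2 + 3*(n:ℂ)*w - (n:ℂ) + 1
      = 2*(n:ℂ)^2*(w - (A:ℂ))*(w - (B:ℂ)) := by
    intro w
    rw [hAC, hBC]
    field_simp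
    ring_nf
    linear_combination 2 * hs2C
  have key : ∀ z : ℂ, z ≠ 0 → (n:ℂ)*z^n + 1 ≠ 0 →
      (Cn n z = 0 ↔ z^n = (A:ℂ) ∨ z^n = (B:ℂ)) := by
    intro z hz hden
    unfold Cn
    rw [div_eq_zero_iff]
    have hd : (2 * ((n:ℂ)*z^n + 1)^3) ≠ 0 :=
      mul_ne_zero two_ne_zero (pow_ne_zero _ hden)
    have h2n : (2*(n:ℂ)^2) ≠ 0 := mul_ne_zero two_ne_zero (pow_ne_zero _ hnC)
    have hzn : z^(n+1) ≠ 0 := pow_ne_zero _ hz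
    constructor
    · rintro (h | h)
      · rcases mul_eq_zero.1 h with h | h
        · exact absurd h (mul_ne_zero hnC hzn)
        · have := h
          rw [show z^(2*n) = (z^n)^2 by rw [pow_mul'], hfac (z^n), mul_assoc] at this
          rcases mul_eq_zero.1 this with h' | h'
          · exact absurd h' h2n
          · rcases mul_eq_zero.1 h' with h'' | h''
            · exact Or.inl (sub_eq_zero.1 h'')
            · exact Or.inr (sub_eq_zero.1 h'')
      · exact absurd h hd
    · intro h
      left
      rw [show z^(2*n) = (z^n)^2 by rw [pow_mul'], hfac (z^n)]
      rcases h with h | h <;> rw [h] <;> ring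
  have hnne : n ≠ 0 := by omega
  have hnA1 : (n:ℝ)*A + 1 = (1+s)/4 := by rw [hA']; field_simp; ring
  have hnB1 : (n:ℝ)*B + 1 = (1-s)/4 := by rw [hB']; field_simp; ring
  have hdenA : ∀ y : ℝ, y^n = A → (n:ℂ)*(y:ℂ)^n + 1 ≠ 0 := by
    intro y h
    have h1 : ((n:ℝ)*y^n + 1 : ℝ) ≠ 0 := by rw [h, hnA1]; positivity
    have : ((((n:ℝ)*y^n + 1 : ℝ)):ℂ) ≠ 0 := Complex.ofReal_ne_zero.mpr h1
    push_cast at this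
    exact this
  have hdenB : ∀ y : ℝ, y^n = B → (n:ℂ)*(y:ℂ)^n + 1 ≠ 0 := by
    intro y h
    have h1 : ((n:ℝ)*y^n + 1 : ℝ) ≠ 0 := by
      rw [h, hnB1]
      have : (1 - s)/4 < 0 := by linarith
      exact ne_of_lt this
    have : ((((n:ℝ)*y^n + 1 : ℝ)):ℂ) ≠ 0 := Complex.ofReal_ne_zero.mpr h1
    push_cast at this
    exact this
  have mem : ∀ y : ℝ, (y ≠ 0 ∧ (n:ℂ)*(y:ℂ)^n + 1 ≠ 0 ∧ Cn n (y:ℂ) = 0) ↔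
      (y^n = A ∨ y^n = B) := by
    intro y
    constructor
    · rintro ⟨h0, h1, h2⟩
      rcases (key y (by exact_mod_cast h0) h1).1 h2 with h | h
      · left; exact_mod_cast h
      · right; exact_mod_cast h
    · intro h
      have hy0 : y ≠ 0 := by
        rintro rfl
        rw [zero_pow hnne] at h
        rcases h with h | h
        · exact absurd h.symm (ne_of_gt hA)
        · exact absurd h.symm (ne_of_lt hB)
      have hden : (n:ℂ)*(y:ℂ)^n + 1 ≠ 0 := by
        rcases h with h | h
        · exact hdenA y h
        · exact hdenB y h
      refine ⟨hy0, hden, (key y (by exact_mod_cast hy0) hden).2 ?_⟩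
      rcases h with h | h
      · left; exact_mod_cast congrArg Complex.ofReal h
      · right; exact_mod_cast congrArg Complex.ofReal h
  set x : ℝ := A ^ ((n:ℝ)⁻¹) with hx'
  have hx : x^n = A := Real.rpow_inv_natCast_pow hA.le hnne
  have hxpos : 0 < x := Real.rpow_pos_of_pos hA _
  refine ⟨?_, ?_, ?_⟩
  · intro z hz hd
    rw [key z hz hd, hAC, hBC]
  · intro he
    refine ⟨x, hxpos, ?_⟩
    ext y
    simp only [Set.mem_setOf_eq, Set.mem_insert_iff, Set.mem_singleton_iff]
    rw [mem y]
    constructor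
    · rintro (h | h)
      · have habs : |y| = |x| := by
          have h2 : |y|^n = |x|^n := by rw [← abs_pow, ← abs_pow, h, hx]
          exact (pow_left_strictMonoOn₀ hnne).injOn (abs_nonneg y) (abs_nonneg x) h2
        exact abs_eq_abs.1 habs
      · exfalso
        have := he.pow_nonneg (a := y)
        rw [h] at this
        linarith
    · rintro (rfl | rfl)
      · exact Or.inl hx
      · left; rw [he.neg_pow]; exact hx
  · intro ho
    set c : ℝ := (-B) ^ ((n:ℝ)⁻¹) with hc'
    have hc : c^n = -B := Real.rpow_inv_natCast_pow (by linarith) hnne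
    have hcpos : 0 < c := Real.rpow_pos_of_pos (by linarith) _
    refine ⟨x, -c, hxpos, by linarith, ?_⟩
    ext y
    simp only [Set.mem_setOf_eq, Set.mem_insert_iff, Set.mem_singleton_iff]
    rw [mem y]
    constructor
    · rintro (h | h)
      · left
        exact ho.strictMono_pow.injective (h.trans hx.symm)
      · right
        refine ho.strictMono_pow.injective ?_
        rw [h, ho.neg_pow, hc]
        ring
    · rintro (rfl | rfl)
      · exact Or.inl hx
      · right
        rw [ho.neg_pow, hc]
        ring
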